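/- Let $X$ be a nondegenerate subvariety of $\mathbb{P}^n$ of dimension $> 0$, and suppose $H$ is a hyperplane such that the scheme-theoretic intersection $X \cap H$ is reduced. Then $X \cap H$ is nondegenerate as a subscheme of $H \cong \mathbb{P}^{n-1}$, i.e., the irreducible components of $X \cap H$ do not all lie in a single hyperplane of $H$. -/

import Mathlib

open MvPolynomial

attribute [local instance] MvPolynomial.gradedAlgebra

/-- **Reduced hyperplane sections of nondegenerate varieties are nondegenerate.**
Let `X = V(P) ⊆ ℙⁿ` be a nondegenerate subvariety of dimension `> 0` (so `P` is a
homogeneous prime ideal, the affine cone has Krull dimension `> 1`, and `P` contains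
no nonzero linear form). Let `H = V(h)` be a hyperplane (`h` a nonzero linear form,
`h ∉ P`) such that the scheme-theoretic intersection `X ∩ H` is reduced (the ideal
`P + (h)` is radical). Then `X ∩ H` is nondegenerate in `H ≅ ℙ^{n-1}`: its
irreducible components do not all lie in a single hyperplane of `H`, i.e. for every
linear form `g` not proportional to `h`, the point set of `X ∩ H` is not contained in
`V(g)`. -/
theorem stmt_1 (n : ℕ) (hn : 1 ≤ n)
    (P : Ideal (MvPolynomial (Fin (n + 1)) ℂ))
    (hhom : P.IsHomogeneous (homogeneousSubmodule (Fin (n + 1)) ℂ))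
    (hprime : P.IsPrime)
    (hdim : 1 < ringKrullDim (MvPolynomial (Fin (n + 1)) ℂ ⧸ P))
    (hnondeg : ∀ g : MvPolynomial (Fin (n + 1)) ℂ, g.IsHomogeneous 1 → g ∈ P → g = 0)
    (h : MvPolynomial (Fin (n + 1)) ℂ) (hh : h.IsHomogeneous 1) (hh0 : h ≠ 0)
    (hhP : h ∉ P)
    (hred : (P ⊔ Ideal.span {h}).IsRadical) :
    ∀ g : MvPolynomial (Fin (n + 1)) ℂ, g.IsHomogeneous 1 →
      (∀ c : ℂ, g ≠ C c * h) →
      ∃ v : Fin (n + 1) → ℂ, v ≠ 0 ∧ (∀ f ∈ P, eval v f = 0) ∧ eval v h = 0 ∧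
        eval v g ≠ 0 := by
  intro g hg hgch
  by_contra hcon
  push_neg at hcon
  -- Step 1: g vanishes on the zero locus of J := P ⊔ span {h}
  set J : Ideal (MvPolynomial (Fin (n + 1)) ℂ) := P ⊔ Ideal.span {h} with hJ
  have hgJ : g ∈ J := by
    have hgv : g ∈ MvPolynomial.vanishingIdeal ℂ (MvPolynomial.zeroLocus ℂ J) := by
      rw [MvPolynomial.mem_vanishingIdeal_iff]
      intro x hx
      rw [MvPolynomial.mem_zeroLocus_iff] at hx
      change eval x g = 0
      by_cases hx0 : x = 0
      · subst hx0
        rw [MvPolynomial.eval_zero]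
        have : coeff 0 g = 0 := hg.coeff_eq_zero (by simp [Finsupp.degree])
        exact this
      · exact hcon x hx0 (fun f hf => hx f (Ideal.mem_sup_left hf))
          (hx h (Ideal.mem_sup_right (Ideal.mem_span_singleton_self h)))
    rw [MvPolynomial.vanishingIdeal_zeroLocus_eq_radical] at hgv
    rwa [hred.radical] at hgv
  -- Step 2: decompose g = p + f * h
  obtain ⟨p, hp, q, hq, hpq⟩ := Submodule.mem_sup.mp hgJ
  obtain ⟨f, hf⟩ := Ideal.mem_span_singleton'.mp hq
  -- Step 3: take homogeneous components of degree 1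
  have hcomp : homogeneousComponent 1 g = homogeneousComponent 1 p +
      C (coeff 0 f) * h := by
    have : homogeneousComponent 1 (f * h) = C (coeff 0 f) * h := by
      conv_lhs => rw [← sum_homogeneousComponent f, Finset.sum_mul, map_sum]
      have key : ∀ i ∈ Finset.range (f.totalDegree + 1),
          homogeneousComponent 1 (homogeneousComponent i f * h) =
          if i = 0 then C (coeff 0 f) * h else 0 := by
        intro i _
        have hih : (homogeneousComponent i f * h).IsHomogeneous (i + 1) :=
          (homogeneousComponent_isHomogeneous i f).mul hh
        rw [homogeneousComponent_of_mem hih]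
        rcases Nat.eq_zero_or_pos i with hi | hi
        · subst hi
          rw [if_pos rfl, if_pos rfl, homogeneousComponent_zero]
        · rw [if_neg (by omega), if_neg (by omega)]
      rw [Finset.sum_congr rfl key, Finset.sum_ite_eq' _ 0 (fun _ => C (coeff 0 f) * h)]
      simp
    rw [← hpq, ← hf, map_add, this]
  have hg1 : homogeneousComponent 1 g = g :=
    by rw [homogeneousComponent_of_mem hg, if_pos rfl]
  -- Step 4: homogeneousComponent 1 p ∈ P
  have hp1 : homogeneousComponent 1 p ∈ P := by
    have := hhom 1 hp
    rwa [← MvPolynomial.decomposition.decompose'_apply p 1]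
  have hp0 : homogeneousComponent 1 p = 0 :=
    hnondeg _ (homogeneousComponent_isHomogeneous 1 p) hp1
  apply hgch (coeff 0 f)
  rw [← hg1, hcomp, hp0, zero_add]
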